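/- A proper submodule P of an A-module M is classical 1-absorbing prime if and only if for every m ∈ M \ P, the ideal (P :_A m) is a 1-absorbing prime ideal of A. -/

import Mathlib

/-- A proper submodule is classical 1-absorbing prime. -/
def IsCl1AbsPrime {A M : Type*} [CommRing A] [AddCommGroup M] [Module A M]
    (P : Submodule A M) : Prop :=
  P ≠ ⊤ ∧ ∀ (a b c : A) (m : M), ¬IsUnit a → ¬IsUnit b → ¬IsUnit c →
    (a * b * c) • m ∈ P → (a * b) • m ∈ P ∨ c • m ∈ P


/-- A proper ideal is 1-absorbing prime. -/
def Is1AbsPrimeIdeal {A : Type*} [CommRing A] (I : Ideal A) : Prop :=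
  I ≠ ⊤ ∧ ∀ a b c : A, ¬IsUnit a → ¬IsUnit b → ¬IsUnit c →
    a * b * c ∈ I → a * b ∈ I ∨ c ∈ I

theorem stmt_8 {A M : Type*} [CommRing A] [AddCommGroup M] [Module A M]
    (P : Submodule A M) (hP : P ≠ ⊤) :
    IsCl1AbsPrime P ↔
      ∀ m : M, m ∉ P → Is1AbsPrimeIdeal (P.colon (Submodule.span A {m})) := by
  constructor
  · rintro ⟨-, h⟩ m hm
    constructor
    · intro htop
      apply hm
      have : (1 : A) ∈ P.colon (Submodule.span A {m}) := htop ▸ trivial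
      simpa using (Submodule.mem_colon_span_singleton).1 this
    · intro a b c ha hb hc habc
      rw [Submodule.mem_colon_span_singleton] at habc ⊢
      rw [Submodule.mem_colon_span_singleton]
      exact h a b c m ha hb hc habc
  · intro h
    refine ⟨hP, fun a b c m ha hb hc habc => ?_⟩
    by_cases hm : m ∈ P
    · exact Or.inl (P.smul_mem _ hm)
    · have := (h m hm).2 a b c ha hb hc
        (Submodule.mem_colon_span_singleton.2 habc)
      rcases this with h1 | h1
      · exact Or.inl (Submodule.mem_colon_span_singleton.1 h1)
      · exact Or.inr (Submodule.mem_colon_span_singleton.1 h1)
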